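/- Let U₁, U₂ be unitary operators on Hilbert spaces H₁, H₂ and suppose along a sequence (h_n), U₁^{h_n} → c₁·I weakly and U₂^{h_n} → c₂·I weakly, where c₁ ≠ c₂ are complex constants. Then the maximal spectral types of U₁ and U₂ are mutually singular; equivalently, there is no nonzero bounded operator W : H₁ → H₂ with W U₁ = U₂ W. -/

import Mathlib

open Filter
open scoped Topology

/-- If `U₁^{h_n} → c₁ I` and `U₂^{h_n} → c₂ I` weakly along a common
sequence `h_n → ∞` with `c₁ ≠ c₂`, then there is no nonzero bounded
intertwining operator `W U₁ = U₂ W`; equivalently, the maximal spectral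
types of `U₁` and `U₂` are mutually singular. -/
theorem no_intertwiner_of_distinct_weak_limits
    {H₁ H₂ : Type*}
    [NormedAddCommGroup H₁] [InnerProductSpace ℂ H₁] [CompleteSpace H₁]
    [NormedAddCommGroup H₂] [InnerProductSpace ℂ H₂] [CompleteSpace H₂]
    (U₁ : H₁ →L[ℂ] H₁) (hU₁ : U₁ ∈ unitary (H₁ →L[ℂ] H₁))
    (U₂ : H₂ →L[ℂ] H₂) (hU₂ : U₂ ∈ unitary (H₂ →L[ℂ] H₂))
    (c₁ c₂ : ℂ) (hc : c₁ ≠ c₂)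
    (h : ℕ → ℕ) (hh : Tendsto h atTop atTop)
    (hlim₁ : ∀ u w : H₁, Tendsto (fun t => (inner ℂ ((U₁ ^ h t) u) w : ℂ))
      atTop (𝓝 (c₁ * (inner ℂ u w : ℂ))))
    (hlim₂ : ∀ u w : H₂, Tendsto (fun t => (inner ℂ ((U₂ ^ h t) u) w : ℂ))
      atTop (𝓝 (c₂ * (inner ℂ u w : ℂ)))) :
    ∀ W : H₁ →L[ℂ] H₂, W ∘L U₁ = U₂ ∘L W → W = 0 := by
  intro W hW
  -- intertwining for powers
  have hpow : ∀ n : ℕ, W ∘L (U₁ ^ n) = (U₂ ^ n) ∘L W := by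
    intro n
    induction n with
    | zero => ext x; simp
    | succ n ih =>
      ext x
      have ihx := congrArg (fun T : H₁ →L[ℂ] H₂ => T (U₁ x)) ih
      have hWx := congrArg (fun T : H₁ →L[ℂ] H₂ => T x) hW
      simp only [ContinuousLinearMap.comp_apply] at ihx hWx
      simp only [ContinuousLinearMap.comp_apply, pow_succ, ContinuousLinearMap.mul_apply, ihx, hWx]
  -- key: ⟪W u, w⟫ = 0 for all u, w
  have key : ∀ (u : H₁) (w : H₂), (inner ℂ (W u) w : ℂ) = 0 := by
    intro u w
    have h1 : Tendsto (fun t => (inner ℂ ((U₁ ^ h t) u) (W.adjoint w) : ℂ))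
        atTop (𝓝 (c₁ * inner ℂ u (W.adjoint w))) := hlim₁ u (W.adjoint w)
    have heq : ∀ t, (inner ℂ ((U₁ ^ h t) u) (W.adjoint w) : ℂ)
        = inner ℂ ((U₂ ^ h t) (W u)) w := by
      intro t
      rw [ContinuousLinearMap.adjoint_inner_right]
      have := congrArg (fun T : H₁ →L[ℂ] H₂ => T u) (hpow (h t))
      simp only [ContinuousLinearMap.comp_apply] at this
      rw [this]
    have h1' : Tendsto (fun t => (inner ℂ ((U₂ ^ h t) (W u)) w : ℂ))
        atTop (𝓝 (c₁ * inner ℂ (W u) w)) := by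
      have : c₁ * (inner ℂ u (W.adjoint w) : ℂ) = c₁ * inner ℂ (W u) w := by
        rw [ContinuousLinearMap.adjoint_inner_right]
      rw [← this]
      exact h1.congr heq
    have h2 := hlim₂ (W u) w
    have := tendsto_nhds_unique h1' h2
    rcases mul_eq_mul_right_iff.mp this with hcc | hz
    · exact absurd hcc hc
    · exact hz
  ext u
  have := key u (W u)
  simpa [inner_self_eq_zero] using this
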